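/- Let Γ be a subgroup of a linearly ordered abelian group Γ' such that the quotient group Γ'/Γ is torsion, and let Δ be a convex subgroup of Γ (with respect to the order induced from Γ'). Then there is exactly one convex subgroup Δ' of Γ' with Δ' ∩ Γ = Δ, namely the convex hull of Δ in Γ', i.e. the set {x ∈ Γ' : ∃ d ∈ Δ, −d ≤ x ≤ d}. -/

import Mathlib

/-- A convex subgroup of a linearly ordered abelian group: a subgroup `H` such that
whenever `h ∈ H` and `0 ≤ x ≤ h`, then `x ∈ H`. -/
def IsConvexSubgroup {Γ : Type*} [AddCommGroup Γ] [LinearOrder Γ] [IsOrderedAddMonoid Γ] (H : AddSubgroup Γ) : Prop :=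
  ∀ h ∈ H, ∀ x : Γ, 0 ≤ x → x ≤ h → x ∈ H

/-- Let `Γ` be a subgroup of a linearly ordered abelian group `Γ'` with `Γ'/Γ` torsion,
and let `Δ` be a convex subgroup of `Γ`.  Then there is exactly one convex subgroup
`Δ'` of `Γ'` with `Δ' ∩ Γ = Δ`, namely the convex hull
`{x ∈ Γ' : ∃ d ∈ Δ, −d ≤ x ≤ d}` of `Δ` in `Γ'`. -/
theorem existsUnique_convex_subgroup_of_torsion_quotient
    {Γ' : Type*} [AddCommGroup Γ'] [LinearOrder Γ'] [IsOrderedAddMonoid Γ'] (Γ : AddSubgroup Γ')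
    (htor : ∀ x : Γ', ∃ n : ℕ, 0 < n ∧ n • x ∈ Γ)
    (Δ : AddSubgroup Γ') (hΔΓ : Δ ≤ Γ)
    (hconv : ∀ h ∈ Δ, ∀ x ∈ Γ, 0 ≤ x → x ≤ h → x ∈ Δ) :
    (∃! Δ' : AddSubgroup Γ', IsConvexSubgroup Δ' ∧ Δ' ⊓ Γ = Δ) ∧
      ∀ Δ' : AddSubgroup Γ', IsConvexSubgroup Δ' → Δ' ⊓ Γ = Δ →
        (Δ' : Set Γ') = {x : Γ' | ∃ d ∈ Δ, -d ≤ x ∧ x ≤ d} := by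
  -- the convex hull of Δ in Γ'
  set S : Set Γ' := {x : Γ' | ∃ d ∈ Δ, -d ≤ x ∧ x ≤ d} with hS
  have Hzero : (0 : Γ') ∈ S := ⟨0, Δ.zero_mem, by simp⟩
  have Hadd : ∀ {a b : Γ'}, a ∈ S → b ∈ S → a + b ∈ S := by
    rintro a b ⟨d, hd, hda, had⟩ ⟨e, he, heb, hbe⟩
    exact ⟨d + e, Δ.add_mem hd he, by rw [neg_add]; exact add_le_add hda heb,
      add_le_add had hbe⟩
  have Hneg : ∀ {a : Γ'}, a ∈ S → -a ∈ S := by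
    rintro a ⟨d, hd, hda, had⟩
    exact ⟨d, hd, by simpa using neg_le_neg had, neg_le.mpr hda⟩
  let H : AddSubgroup Γ' :=
    { carrier := S
      zero_mem' := Hzero
      add_mem' := Hadd
      neg_mem' := Hneg }
  have Hconv : IsConvexSubgroup H := by
    rintro h ⟨d, hd, _, hhd⟩ x hx0 hxh
    have hd0 : (0:Γ') ≤ d := le_trans hx0 (le_trans hxh hhd)
    exact ⟨d, hd, le_trans (neg_nonpos_of_nonneg hd0) hx0, le_trans hxh hhd⟩
  have Hinf : H ⊓ Γ = Δ := by
    apply le_antisymm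
    · rintro x ⟨hxH, hxΓ⟩
      obtain ⟨d, hd, hdx, hxd⟩ := hxH
      rcases le_total 0 x with h0 | h0
      · exact hconv d hd x hxΓ h0 hxd
      · have : -x ∈ Δ := hconv d hd (-x) (Γ.neg_mem hxΓ) (neg_nonneg.mpr h0)
          (by simpa using neg_le_neg hdx)
        simpa using Δ.neg_mem this
    · intro x hx
      rcases le_total 0 x with h0 | h0
      · exact ⟨⟨x, hx, neg_le_self h0, le_rfl⟩, hΔΓ hx⟩
      · exact ⟨⟨-x, Δ.neg_mem hx, by simp [h0], le_neg_self_iff.mpr h0⟩, hΔΓ hx⟩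
  -- any convex subgroup with intersection Δ equals H (as a set)
  have key : ∀ Δ' : AddSubgroup Γ', IsConvexSubgroup Δ' → Δ' ⊓ Γ = Δ →
      (Δ' : Set Γ') = S := by
    intro Δ' hc hi
    apply Set.Subset.antisymm
    · intro x hx
      -- reduce to the nonneg case
      have main : ∀ y : Γ', y ∈ Δ' → 0 ≤ y → y ∈ S := by
        intro y hy hy0
        obtain ⟨n, hn, hnΓ⟩ := htor y
        have hnΔ' : n • y ∈ Δ' := AddSubgroup.nsmul_mem Δ' hy n
        have hnΔ : n • y ∈ Δ := by rw [← hi]; exact ⟨hnΔ', hnΓ⟩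
        have hle : y ≤ n • y := by
          calc y = 1 • y := (one_nsmul y).symm
          _ ≤ n • y := nsmul_le_nsmul_left hy0 hn
        have h0n : 0 ≤ n • y := le_trans hy0 hle
        exact ⟨n • y, hnΔ, le_trans (neg_nonpos_of_nonneg h0n) hy0, hle⟩
      rcases le_total 0 x with h0 | h0
      · exact main x hx h0
      · have := main (-x) (Δ'.neg_mem hx) (neg_nonneg.mpr h0)
        simpa using Hneg this
    · rintro x ⟨d, hd, hdx, hxd⟩
      have hdΔ' : d ∈ Δ' := by
        have : d ∈ Δ' ⊓ Γ := by rw [hi]; exact hd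
        exact this.1
      rcases le_total 0 x with h0 | h0
      · exact hc d hdΔ' x h0 hxd
      · have : -x ∈ Δ' := hc d hdΔ' (-x) (neg_nonneg.mpr h0) (by simpa using neg_le_neg hdx)
        simpa using Δ'.neg_mem this
  refine ⟨⟨H, ⟨Hconv, Hinf⟩, ?_⟩, key⟩
  intro Δ' ⟨hc, hi⟩
  exact SetLike.coe_injective (key Δ' hc hi)
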